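/- Let v₁,…,v_k ∈ ℂⁿ with ‖v_i‖² ≤ δ for all i, and suppose α‖w‖² ≤ ∑_{i=1}^k |⟨w,v_i⟩|² ≤ β‖w‖² for all w ∈ ℂⁿ, where α > δ > 0. Then there exists a partition of {1,…,k} into S₁ and S₂ such that for each j = 1,2 and all w ∈ ℂⁿ: ((1−5√(δ/α))/2)·α·‖w‖² ≤ ∑_{i∈S_j} |⟨w,v_i⟩|² ≤ ((1+5√(δ/α))/2)·β·‖w‖². (This may be deduced assuming the Marcus–Spielman–Srivastava partition theorem: if ‖u_i‖² ≤ ε for all i and ∑|⟨w,u_i⟩|² = ‖w‖² for all w, then {1,…,m} can be partitioned into two sets on each of which ∑|⟨w,u_i⟩|² ≤ ((1+√(2ε))²/2)‖w‖².) -/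

import Mathlib

open Finset

noncomputable def Amap {n : ℕ} (b : OrthonormalBasis (Fin n) ℂ (EuclideanSpace ℂ (Fin n)))
    (c : Fin n → ℝ) (x : EuclideanSpace ℂ (Fin n)) : EuclideanSpace ℂ (Fin n) :=
  ∑ j, ((c j : ℂ) * (inner ℂ (b j) x : ℂ)) • b j

variable {n : ℕ} (b : OrthonormalBasis (Fin n) ℂ (EuclideanSpace ℂ (Fin n)))

lemma inner_Amap (c : Fin n → ℝ) (x y : EuclideanSpace ℂ (Fin n)) :
    (inner ℂ x (Amap b c y) : ℂ) = ∑ j, (c j : ℂ) * (inner ℂ x (b j) : ℂ) * (inner ℂ (b j) y : ℂ) := by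
  simp only [Amap, inner_sum, inner_smul_right]
  exact Finset.sum_congr rfl fun j _ => by ring

lemma Amap_inner (c : Fin n → ℝ) (x y : EuclideanSpace ℂ (Fin n)) :
    (inner ℂ (Amap b c x) y : ℂ) = ∑ j, (c j : ℂ) * (inner ℂ x (b j) : ℂ) * (inner ℂ (b j) y : ℂ) := by
  simp only [Amap, sum_inner, inner_smul_left, map_mul, Complex.conj_ofReal, inner_conj_symm]

lemma Amap_adj (c : Fin n → ℝ) (x y : EuclideanSpace ℂ (Fin n)) :
    (inner ℂ (Amap b c x) y : ℂ) = inner ℂ x (Amap b c y) := by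
  rw [Amap_inner, inner_Amap]

lemma inner_basis_Amap (c : Fin n → ℝ) (x : EuclideanSpace ℂ (Fin n)) (j : Fin n) :
    (inner ℂ (b j) (Amap b c x) : ℂ) = (c j : ℂ) * inner ℂ (b j) x := by
  rw [inner_Amap]
  rw [Finset.sum_eq_single j]
  · simp [orthonormal_iff_ite.mp b.orthonormal]
  · intro j' _ hj'
    simp [orthonormal_iff_ite.mp b.orthonormal, (Ne.symm hj' : ¬ j = j')]
  · simp

lemma Amap_Amap (c d : Fin n → ℝ) (x : EuclideanSpace ℂ (Fin n)) :
    Amap b c (Amap b d x) = Amap b (fun j => c j * d j) x := by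
  show ∑ j, ((c j : ℂ) * (inner ℂ (b j) (Amap b d x) : ℂ)) • b j = _
  simp only [inner_basis_Amap]
  simp only [Amap]
  exact Finset.sum_congr rfl fun j _ => by push_cast; ring_nf

lemma Amap_one (x : EuclideanSpace ℂ (Fin n)) : Amap b (fun _ => 1) x = x := by
  simp only [Amap, Complex.ofReal_one, one_mul]
  exact b.sum_repr' x

lemma inner_Amap_self (c : Fin n → ℝ) (x : EuclideanSpace ℂ (Fin n)) :
    (inner ℂ x (Amap b c x) : ℂ) = ((∑ j, c j * ‖(inner ℂ (b j) x : ℂ)‖ ^ 2 : ℝ) : ℂ) := by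
  rw [inner_Amap]
  push_cast
  refine Finset.sum_congr rfl fun j _ => ?_
  have h : (inner ℂ x (b j) : ℂ) = (starRingEnd ℂ) (inner ℂ (b j) x) := (inner_conj_symm _ _).symm
  rw [h, mul_assoc, mul_comm ((starRingEnd ℂ) _), Complex.mul_conj, Complex.normSq_eq_norm_sq]
  push_cast
  ring

lemma Amap_congr {n : ℕ} (b : OrthonormalBasis (Fin n) ℂ (EuclideanSpace ℂ (Fin n)))
    {c d : Fin n → ℝ} (h : ∀ j, c j = d j) (x : EuclideanSpace ℂ (Fin n)) :
    Amap b c x = Amap b d x := by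
  have : c = d := funext h
  rw [this]

lemma Amap_eq_one {n : ℕ} (b : OrthonormalBasis (Fin n) ℂ (EuclideanSpace ℂ (Fin n)))
    {c : Fin n → ℝ} (h : ∀ j, c j = 1) (x : EuclideanSpace ℂ (Fin n)) :
    Amap b c x = x := by
  rw [Amap_congr b h x, Amap_one]

lemma norm_sq_eq_of_inner {n : ℕ} (x : EuclideanSpace ℂ (Fin n)) (a : ℝ)
    (h : (inner ℂ x x : ℂ) = (a : ℂ)) : ‖x‖ ^ 2 = a := by
  have h2 : ((‖x‖ ^ 2 : ℝ) : ℂ) = (a : ℂ) := by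
    rw [← h, inner_self_eq_norm_sq_to_K]; push_cast; rfl
  exact_mod_cast h2

set_option maxHeartbeats 1000000 in
theorem stmt2 (n k : ℕ) (δ α β : ℝ) (hδ : 0 < δ) (hα : δ < α) (hβ : 0 < β)
    (hMSS : ∀ (m : ℕ) (ε : ℝ), 0 < ε → ∀ u : Fin m → EuclideanSpace ℂ (Fin n),
      (∀ i, ‖u i‖ ^ 2 ≤ ε) →
      (∀ w : EuclideanSpace ℂ (Fin n), ∑ i, ‖(inner ℂ w (u i) : ℂ)‖ ^ 2 = ‖w‖ ^ 2) →
      ∃ S : Finset (Fin m), ∀ w : EuclideanSpace ℂ (Fin n),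
        (∑ i ∈ S, ‖(inner ℂ w (u i) : ℂ)‖ ^ 2 ≤ (1 + Real.sqrt (2 * ε)) ^ 2 / 2 * ‖w‖ ^ 2) ∧
        (∑ i ∈ Sᶜ, ‖(inner ℂ w (u i) : ℂ)‖ ^ 2 ≤ (1 + Real.sqrt (2 * ε)) ^ 2 / 2 * ‖w‖ ^ 2))
    (v : Fin k → EuclideanSpace ℂ (Fin n))
    (hv : ∀ i, ‖v i‖ ^ 2 ≤ δ)
    (hframe : ∀ w : EuclideanSpace ℂ (Fin n),
      α * ‖w‖ ^ 2 ≤ ∑ i, ‖(inner ℂ w (v i) : ℂ)‖ ^ 2 ∧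
      ∑ i, ‖(inner ℂ w (v i) : ℂ)‖ ^ 2 ≤ β * ‖w‖ ^ 2) :
    ∃ S : Finset (Fin k), ∀ w : EuclideanSpace ℂ (Fin n),
      ((1 - 5 * Real.sqrt (δ / α)) / 2 * α * ‖w‖ ^ 2 ≤ ∑ i ∈ S, ‖(inner ℂ w (v i) : ℂ)‖ ^ 2 ∧
        ∑ i ∈ S, ‖(inner ℂ w (v i) : ℂ)‖ ^ 2 ≤ (1 + 5 * Real.sqrt (δ / α)) / 2 * β * ‖w‖ ^ 2) ∧
      ((1 - 5 * Real.sqrt (δ / α)) / 2 * α * ‖w‖ ^ 2 ≤ ∑ i ∈ Sᶜ, ‖(inner ℂ w (v i) : ℂ)‖ ^ 2 ∧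
        ∑ i ∈ Sᶜ, ‖(inner ℂ w (v i) : ℂ)‖ ^ 2 ≤ (1 + 5 * Real.sqrt (δ / α)) / 2 * β * ‖w‖ ^ 2) := by
  have hα0 : 0 < α := hδ.trans hα
  -- the frame operator
  set T : EuclideanSpace ℂ (Fin n) →ₗ[ℂ] EuclideanSpace ℂ (Fin n) :=
    ∑ i, LinearMap.smulRight (innerSL ℂ (v i)).toLinearMap (v i) with hTdef
  have hT : ∀ w, T w = ∑ i, (inner ℂ (v i) w : ℂ) • v i := by
    intro w; simp [hTdef, LinearMap.sum_apply]
  have hTsym : T.IsSymmetric := by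
    intro x y
    rw [hT, hT, sum_inner, inner_sum]
    refine Finset.sum_congr rfl fun i _ => ?_
    rw [inner_smul_left, inner_smul_right, ← inner_conj_symm x (v i)]
    ring
  have hQuad : ∀ w, (inner ℂ w (T w) : ℂ) = ((∑ i, ‖(inner ℂ w (v i) : ℂ)‖ ^ 2 : ℝ) : ℂ) := by
    intro w
    rw [hT, inner_sum]
    push_cast
    refine Finset.sum_congr rfl fun i _ => ?_
    rw [inner_smul_right,
      show (inner ℂ (v i) w : ℂ) = (starRingEnd ℂ) (inner ℂ w (v i)) from (inner_conj_symm (v i) w).symm,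
      mul_comm, Complex.mul_conj, Complex.normSq_eq_norm_sq]
    push_cast
    ring
  have hrank : Module.finrank ℂ (EuclideanSpace ℂ (Fin n)) = n := finrank_euclideanSpace_fin
  set b := hTsym.eigenvectorBasis hrank with hbdef
  set μ := hTsym.eigenvalues hrank with hμdef
  have hEig : ∀ j, T (b j) = (μ j : ℂ) • b j := fun j => hTsym.apply_eigenvectorBasis hrank j
  have hbnorm : ∀ j, ‖b j‖ = 1 := fun j => b.orthonormal.1 j
  have hμ : ∀ j, α ≤ μ j := by
    intro j
    have h1 : (inner ℂ (b j) (T (b j)) : ℂ) = ((μ j : ℝ) : ℂ) := by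
      rw [hEig, inner_smul_right, inner_self_eq_norm_sq_to_K, hbnorm]
      push_cast; ring
    have h2 : (∑ i, ‖(inner ℂ (b j) (v i) : ℂ)‖ ^ 2 : ℝ) = μ j := by
      have := (hQuad (b j)).symm.trans h1
      exact_mod_cast this
    have h3 := (hframe (b j)).1
    rw [hbnorm j, one_pow, mul_one, h2] at h3
    exact h3
  have hμ0 : ∀ j, 0 < μ j := fun j => lt_of_lt_of_le hα0 (hμ j)
  set s : Fin n → ℝ := fun j => Real.sqrt (μ j) with hsdef
  set r : Fin n → ℝ := fun j => (Real.sqrt (μ j))⁻¹ with hrdef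
  have hsq : ∀ j, s j * s j = μ j := fun j => Real.mul_self_sqrt (hμ0 j).le
  have hs0 : ∀ j, s j ≠ 0 := fun j => (Real.sqrt_pos.mpr (hμ0 j)).ne'
  have hrs1 : ∀ j, r j * s j = 1 := fun j => inv_mul_cancel₀ (hs0 j)
  have hTA : ∀ x, T x = Amap b μ x := by
    intro x
    conv_lhs => rw [← b.sum_repr' x]
    rw [map_sum]
    simp only [map_smul, hEig, Amap, smul_smul]
    exact Finset.sum_congr rfl fun j _ => by ring_nf
  set u : Fin k → EuclideanSpace ℂ (Fin n) := fun i => Amap b r (v i) with hudef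
  have hPar : ∀ x : EuclideanSpace ℂ (Fin n),
      (∑ j, ‖(inner ℂ (b j) x : ℂ)‖ ^ 2 : ℝ) = ‖x‖ ^ 2 := by
    intro x
    have h1 : (inner ℂ x x : ℂ) = ((∑ j, ‖(inner ℂ (b j) x : ℂ)‖ ^ 2 : ℝ) : ℂ) := by
      nth_rewrite 2 [← Amap_one b x]
      rw [inner_Amap_self]
      norm_num
    exact (norm_sq_eq_of_inner x _ h1).symm
  have G1 : ∀ (w : EuclideanSpace ℂ (Fin n)) i,
      (inner ℂ w (u i) : ℂ) = inner ℂ (Amap b r w) (v i) := fun w i => (Amap_adj b r w (v i)).symm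
  have hrone : ∀ x, Amap b r (Amap b μ (Amap b r x)) = x := by
    intro x
    rw [Amap_Amap, Amap_Amap]
    refine Amap_eq_one b (fun j => ?_) x
    have h1 : μ j * r j = s j := by
      rw [← hsq j, mul_assoc, mul_comm (s j) (r j), hrs1 j, mul_one]
    rw [mul_assoc, h1, hrs1 j]
  have G2 : ∀ w : EuclideanSpace ℂ (Fin n), ∑ i, ‖(inner ℂ w (u i) : ℂ)‖ ^ 2 = ‖w‖ ^ 2 := by
    intro w
    have e1 : (inner ℂ (Amap b r w) (T (Amap b r w)) : ℂ) = (inner ℂ w w : ℂ) := by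
      rw [Amap_adj, hTA, hrone]
    rw [hQuad] at e1
    have e3 : (∑ i, ‖(inner ℂ (Amap b r w) (v i) : ℂ)‖ ^ 2 : ℝ) = ‖w‖ ^ 2 :=
      (norm_sq_eq_of_inner w _ e1.symm).symm
    simpa [G1 w] using e3
  have G3 : ∀ i, ‖u i‖ ^ 2 ≤ δ / α := by
    intro i
    have e : (inner ℂ (u i) (u i) : ℂ)
        = ((∑ j, (r j * r j) * ‖(inner ℂ (b j) (v i) : ℂ)‖ ^ 2 : ℝ) : ℂ) := by
      rw [hudef]
      simp only
      rw [Amap_adj, Amap_Amap, inner_Amap_self]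
    have e2 : ‖u i‖ ^ 2 = ∑ j, (r j * r j) * ‖(inner ℂ (b j) (v i) : ℂ)‖ ^ 2 :=
      norm_sq_eq_of_inner _ _ e
    have hrr : ∀ j, r j * r j ≤ α⁻¹ := by
      intro j
      have h1 : r j * r j = (μ j)⁻¹ := by
        rw [← hsq j]; simp only [hrdef, hsdef, ← mul_inv]
      rw [h1]
      exact inv_anti₀ hα0 (hμ j)
    calc ‖u i‖ ^ 2 = ∑ j, (r j * r j) * ‖(inner ℂ (b j) (v i) : ℂ)‖ ^ 2 := e2
      _ ≤ ∑ j, α⁻¹ * ‖(inner ℂ (b j) (v i) : ℂ)‖ ^ 2 :=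
          Finset.sum_le_sum fun j _ => mul_le_mul_of_nonneg_right (hrr j) (by positivity)
      _ = α⁻¹ * ‖v i‖ ^ 2 := by rw [← Finset.mul_sum, hPar]
      _ ≤ α⁻¹ * δ := mul_le_mul_of_nonneg_left (hv i) (by positivity)
      _ = δ / α := by field_simp
  obtain ⟨S, hS⟩ := hMSS k (δ / α) (div_pos hδ hα0) u G3 G2
  refine ⟨S, fun w => ?_⟩
  set q := Real.sqrt (δ / α) with hqdef
  set C := (1 + Real.sqrt (2 * (δ / α))) ^ 2 / 2 with hCdef
  have hq0 : 0 ≤ q := Real.sqrt_nonneg _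
  have hq1 : q ≤ 1 := Real.sqrt_le_one.mpr (le_of_lt ((div_lt_one hα0).mpr hα))
  have hC : C ≤ (1 + 5 * q) / 2 := by
    have h2 : Real.sqrt (2 * (δ / α)) = Real.sqrt 2 * q := Real.sqrt_mul (by norm_num) _
    have hs2 : Real.sqrt 2 ^ 2 = 2 := Real.sq_sqrt (by norm_num)
    have hs2' : Real.sqrt 2 ≤ 3 / 2 := by nlinarith [Real.sqrt_nonneg 2]
    have hqq : q ^ 2 = δ / α := Real.sq_sqrt (le_of_lt (div_pos hδ hα0))
    rw [hCdef, h2]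
    nlinarith [Real.sqrt_nonneg 2, mul_nonneg hq0 hq0]
  have hC0 : 0 ≤ C := by positivity
  -- transfer MSS bounds to v sums
  set w' := Amap b s w with hw'def
  have hw'r : Amap b r w' = w := by
    rw [hw'def, Amap_Amap]
    exact Amap_eq_one b (fun j => hrs1 j) w
  have hwv : ∀ i, (inner ℂ w (v i) : ℂ) = inner ℂ w' (u i) := by
    intro i
    rw [G1 w' i, hw'r]
  have hnormw' : ‖w'‖ ^ 2 = ∑ i, ‖(inner ℂ w (v i) : ℂ)‖ ^ 2 := by
    have e1 : (inner ℂ w' w' : ℂ) = inner ℂ w (T w) := by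
      rw [hw'def, Amap_adj, Amap_Amap, hTA]
      exact congrArg _ (Amap_congr b (fun j => hsq j) w)
    rw [hQuad] at e1
    exact norm_sq_eq_of_inner _ _ e1
  set Tot := ∑ i, ‖(inner ℂ w (v i) : ℂ)‖ ^ 2 with hTotdef
  have hSw := hS w'
  have hSsum : ∑ i ∈ S, ‖(inner ℂ w (v i) : ℂ)‖ ^ 2 ≤ C * Tot := by
    have h := hSw.1
    simp only [← hwv] at h
    rw [hnormw'] at h
    exact h
  have hScsum : ∑ i ∈ Sᶜ, ‖(inner ℂ w (v i) : ℂ)‖ ^ 2 ≤ C * Tot := by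
    have h := hSw.2
    simp only [← hwv] at h
    rw [hnormw'] at h
    exact h
  have hsplit : (∑ i ∈ S, ‖(inner ℂ w (v i) : ℂ)‖ ^ 2) + ∑ i ∈ Sᶜ, ‖(inner ℂ w (v i) : ℂ)‖ ^ 2
      = Tot := Finset.sum_add_sum_compl S _
  have hTlo := (hframe w).1
  have hThi := (hframe w).2
  have hTot0 : 0 ≤ Tot := le_trans (by positivity) hTlo
  have hw2 : (0:ℝ) ≤ ‖w‖ ^ 2 := by positivity
  have main : ∀ a c : ℝ, 0 ≤ a → a + c = Tot → a ≤ C * Tot → c ≤ C * Tot →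
      (1 - 5 * q) / 2 * α * ‖w‖ ^ 2 ≤ a ∧ a ≤ (1 + 5 * q) / 2 * β * ‖w‖ ^ 2 := by
    intro a c ha0 hac ha hc
    constructor
    · rcases le_or_gt (1 - 5 * q) 0 with h | h
      · have h1 : (1 - 5 * q) / 2 * α * ‖w‖ ^ 2 ≤ 0 := by
          nlinarith [mul_nonneg hα0.le hw2]
        linarith [h1, ha0]
      · nlinarith [mul_le_mul_of_nonneg_right hC hTot0,
          mul_le_mul_of_nonneg_left hTlo (by linarith : (0:ℝ) ≤ (1 - 5 * q) / 2)]
    · calc a ≤ C * Tot := ha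
        _ ≤ (1 + 5 * q) / 2 * Tot := mul_le_mul_of_nonneg_right hC hTot0
        _ ≤ (1 + 5 * q) / 2 * (β * ‖w‖ ^ 2) :=
            mul_le_mul_of_nonneg_left hThi (by linarith)
        _ = (1 + 5 * q) / 2 * β * ‖w‖ ^ 2 := by ring
  have hsplit' : (∑ i ∈ Sᶜ, ‖(inner ℂ w (v i) : ℂ)‖ ^ 2) + ∑ i ∈ S, ‖(inner ℂ w (v i) : ℂ)‖ ^ 2
      = Tot := by linarith [hsplit]
  have hnn : ∀ P : Finset (Fin k), (0:ℝ) ≤ ∑ i ∈ P, ‖(inner ℂ w (v i) : ℂ)‖ ^ 2 :=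
    fun P => Finset.sum_nonneg fun i _ => by positivity
  exact ⟨main _ _ (hnn S) hsplit hSsum hScsum, main _ _ (hnn Sᶜ) hsplit' hScsum hSsum⟩
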